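/- Let p ≥ 3 be a real number. For all real t with |t| ≤ 1 and all real θ with |θ| ≤ 1, one has (1 + t² + 2tθ)^(p/2) ≥ 1 + |t|^p + p·|t|^(p-2)·t·θ + p·t·θ. (Note 1 + t² + 2tθ ≥ 0 under these constraints.) -/

import Mathlib

open Real

/-- helper: `(x^2)^r = x^(2r)` for `0 ≤ x`. -/
private lemma sq_rpow_aux {x : ℝ} (hx : 0 ≤ x) (r : ℝ) : (x ^ 2) ^ r = x ^ (2 * r) := by
  rw [← Real.rpow_natCast x 2, ← Real.rpow_mul hx]
  norm_num

/-- tangent line inequality for `rpow` with exponent `≥ 1`. -/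
private lemma tangent_rpow {x y r : ℝ} (hx : 0 ≤ x) (hy : 0 ≤ y) (hr : 1 ≤ r) :
    x ^ r + r * x ^ (r - 1) * (y - x) ≤ y ^ r := by
  rcases eq_or_lt_of_le hx with h0 | hxpos
  · rcases eq_or_lt_of_le hr with hr1 | hr1
    · rw [← h0, ← hr1]
      simp
    · rw [← h0, Real.zero_rpow (by linarith), Real.zero_rpow (by intro h; rw [sub_eq_zero] at h; exact hr1.ne h.symm)]
      simpa using Real.rpow_nonneg hy r
  · have hx' : x ≠ 0 := ne_of_gt hxpos
    have hz : -1 ≤ y / x - 1 := by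
      have : 0 ≤ y / x := div_nonneg hy hxpos.le
      linarith
    have hb := one_add_mul_self_le_rpow_one_add hz hr
    have h1 : 1 + (y / x - 1) = y / x := by ring
    rw [h1, Real.div_rpow hy hxpos.le] at hb
    have hxr : (0 : ℝ) < x ^ r := Real.rpow_pos_of_pos hxpos r
    have h3 : x ^ r * (1 + r * (y / x - 1)) ≤ y ^ r := by
      calc x ^ r * (1 + r * (y / x - 1)) ≤ x ^ r * (y ^ r / x ^ r) :=
            mul_le_mul_of_nonneg_left hb hxr.le
        _ = y ^ r := by field_simp
    refine le_trans (le_of_eq ?_) h3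
    rw [Real.rpow_sub_one hx' r]
    field_simp

/-- superadditivity of `rpow` with exponent `≥ 1` on nonnegative reals. -/
private lemma superadd_rpow {x y r : ℝ} (hx : 0 ≤ x) (hy : 0 ≤ y) (hr : 1 ≤ r) :
    x ^ r + y ^ r ≤ (x + y) ^ r := by
  rcases eq_or_lt_of_le (add_nonneg hx hy) with h0 | hpos
  · have hx0 : x = 0 := by linarith
    have hy0 : y = 0 := by linarith
    rw [hx0, hy0]
    simp [Real.zero_rpow (show r ≠ 0 by linarith)]
  · have hr1 : (0 : ℝ) ≤ r - 1 := by linarith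
    have h1 : x ^ r ≤ x * (x + y) ^ (r - 1) := by
      rcases eq_or_lt_of_le hx with h | h
      · rw [← h, Real.zero_rpow (show r ≠ 0 by linarith), zero_mul]
      · have hxx : x ^ r = x * x ^ (r - 1) := by
          rw [mul_comm, ← Real.rpow_add_one h.ne' (r - 1), sub_add_cancel]
        rw [hxx]
        exact mul_le_mul_of_nonneg_left
          (Real.rpow_le_rpow h.le (by linarith) hr1) h.le
    have h2 : y ^ r ≤ y * (x + y) ^ (r - 1) := by
      rcases eq_or_lt_of_le hy with h | h
      · rw [← h, Real.zero_rpow (show r ≠ 0 by linarith), zero_mul]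
      · have hyy : y ^ r = y * y ^ (r - 1) := by
          rw [mul_comm, ← Real.rpow_add_one h.ne' (r - 1), sub_add_cancel]
        rw [hyy]
        exact mul_le_mul_of_nonneg_left
          (Real.rpow_le_rpow h.le (by linarith) hr1) h.le
    have h3 : (x + y) ^ r = (x + y) * (x + y) ^ (r - 1) := by
      rw [mul_comm, ← Real.rpow_add_one hpos.ne' (r - 1), sub_add_cancel]
    rw [h3]
    calc x ^ r + y ^ r ≤ x * (x + y) ^ (r - 1) + y * (x + y) ^ (r - 1) := add_le_add h1 h2
      _ = (x + y) * (x + y) ^ (r - 1) := by ring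

/-- the purely polynomial part of the argument. -/
private lemma poly_aux {s a q : ℝ} (hs : 0 ≤ s) (hsa : s ≤ a) (ha : a ≤ 1) (hq : 1 ≤ q) :
    1 + a ^ 3 + (q + 2) * s * (1 + a) ≤ (1 + q * s) * ((1 + s) ^ 2 + (q / 2 + 1) * (a ^ 2 - s ^ 2)) := by
  nlinarith [mul_nonneg (mul_nonneg (sub_nonneg.mpr hsa) (sub_nonneg.mpr hsa))
      (show (0:ℝ) ≤ 3 - 2 * a - s by linarith),
    mul_nonneg (sub_nonneg.mpr hq) (mul_nonneg (sub_nonneg.mpr hsa) (sub_nonneg.mpr hsa)),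
    mul_nonneg (sub_nonneg.mpr hq) (mul_nonneg hs hs),
    mul_nonneg (sub_nonneg.mpr hq) (mul_nonneg (mul_nonneg (le_trans hs hsa) (le_trans hs hsa)) hs),
    mul_nonneg (mul_nonneg (sub_nonneg.mpr hq) (show (0:ℝ) ≤ q + 1 by linarith))
      (mul_nonneg (mul_nonneg hs (sub_nonneg.mpr hsa)) (show (0:ℝ) ≤ a + s by linarith))]

/-- the key scalar inequality with `a = |t|`, `s = tθ`. -/
private lemma key_ineq (p a s : ℝ) (hp : 3 ≤ p) (ha0 : 0 ≤ a) (ha1 : a ≤ 1) (hs : |s| ≤ a) :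
    1 + a ^ p + p * (1 + a ^ (p - 2)) * s ≤ (1 + a ^ 2 + 2 * s) ^ (p / 2) := by
  obtain ⟨hs1, hs2⟩ := abs_le.mp hs
  rcases eq_or_lt_of_le ha0 with h0 | hapos
  · -- a = 0, hence s = 0
    have hs0 : s = 0 := by
      have := hs1
      have := hs2
      rw [← h0] at *
      linarith
    rw [← h0, hs0]
    rw [Real.zero_rpow (show p ≠ 0 by linarith), Real.zero_rpow (show p - 2 ≠ 0 by intro h; nlinarith [sub_eq_zero.mp h])]
    norm_num
  -- now 0 < a
  have hp2 : (1 : ℝ) ≤ p - 2 := by linarith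
  have hp21 : (1 : ℝ) ≤ p / 2 := by linarith
  have h1s : (0 : ℝ) ≤ 1 + s := by linarith
  have hB : (0 : ℝ) ≤ a ^ 2 - s ^ 2 := by nlinarith
  have hbase : 1 + a ^ 2 + 2 * s = (1 + s) ^ 2 + (a ^ 2 - s ^ 2) := by ring
  have haqnn : (0 : ℝ) ≤ a ^ (p - 2) := Real.rpow_nonneg ha0 _
  have hap3 : a ^ p ≤ a ^ 3 := by
    have : a ^ p ≤ a ^ ((3 : ℕ) : ℝ) :=
      Real.rpow_le_rpow_of_exponent_ge hapos ha1 (by push_cast; linarith)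
    rwa [Real.rpow_natCast] at this
  have haq : a ^ (p - 2) ≤ a := by
    have : a ^ (p - 2) ≤ a ^ (1 : ℝ) :=
      Real.rpow_le_rpow_of_exponent_ge hapos ha1 (by linarith)
    rwa [Real.rpow_one] at this
  have c1 : ((1 + s) ^ 2 : ℝ) ^ (p / 2) = (1 + s) ^ p := by
    rw [sq_rpow_aux h1s, show 2 * (p / 2) = p by ring]
  have c2 : ((1 + s) ^ 2 : ℝ) ^ (p / 2 - 1) = (1 + s) ^ (p - 2) := by
    rw [sq_rpow_aux h1s, show 2 * (p / 2 - 1) = p - 2 by ring]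
  rcases le_or_gt 0 s with hs0 | hs0
  · -- case 0 ≤ s
    have h1spos : (0 : ℝ) < 1 + s := by linarith
    have T := tangent_rpow (x := (1 + s) ^ 2) (y := (1 + s) ^ 2 + (a ^ 2 - s ^ 2))
        (r := p / 2) (by positivity) (by positivity) hp21
    rw [c1, c2, add_sub_cancel_left] at T
    have c3 : (1 + s) ^ p = (1 + s) ^ 2 * (1 + s) ^ (p - 2) := by
      rw [← Real.rpow_natCast (1 + s) 2, ← Real.rpow_add h1spos]
      norm_num
    have hbern : 1 + (p - 2) * s ≤ (1 + s) ^ (p - 2) :=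
      one_add_mul_self_le_rpow_one_add (by linarith) hp2
    have hbr : (0 : ℝ) ≤ (1 + s) ^ 2 + p / 2 * (a ^ 2 - s ^ 2) := by positivity
    have T2 : ((1 + s) ^ 2 + p / 2 * (a ^ 2 - s ^ 2)) * (1 + (p - 2) * s)
        ≤ ((1 + s) ^ 2 + (a ^ 2 - s ^ 2)) ^ (p / 2) := by
      calc ((1 + s) ^ 2 + p / 2 * (a ^ 2 - s ^ 2)) * (1 + (p - 2) * s)
          ≤ ((1 + s) ^ 2 + p / 2 * (a ^ 2 - s ^ 2)) * (1 + s) ^ (p - 2) :=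
            mul_le_mul_of_nonneg_left hbern hbr
        _ = (1 + s) ^ 2 * (1 + s) ^ (p - 2) + p / 2 * (1 + s) ^ (p - 2) * (a ^ 2 - s ^ 2) := by
            ring
        _ = (1 + s) ^ p + p / 2 * (1 + s) ^ (p - 2) * (a ^ 2 - s ^ 2) := by rw [← c3]
        _ ≤ ((1 + s) ^ 2 + (a ^ 2 - s ^ 2)) ^ (p / 2) := T
    have hpoly := poly_aux (q := p - 2) hs0 hs2 ha1 hp2
    have hq1 : ((p - 2) / 2 + 1) = p / 2 := by ring
    have hq2 : (p - 2 + 2) = p := by ring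
    rw [hq1, hq2] at hpoly
    have hfin : 1 + a ^ p + p * (1 + a ^ (p - 2)) * s ≤ 1 + a ^ 3 + p * s * (1 + a) := by
      have h1 : p * a ^ (p - 2) * s ≤ p * a * s := by
        have : a ^ (p - 2) * (p * s) ≤ a * (p * s) :=
          mul_le_mul_of_nonneg_right haq (by positivity)
        nlinarith [this]
      nlinarith [hap3, h1]
    calc 1 + a ^ p + p * (1 + a ^ (p - 2)) * s ≤ 1 + a ^ 3 + p * s * (1 + a) := hfin
      _ ≤ (1 + (p - 2) * s) * ((1 + s) ^ 2 + p / 2 * (a ^ 2 - s ^ 2)) := hpoly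
      _ = ((1 + s) ^ 2 + p / 2 * (a ^ 2 - s ^ 2)) * (1 + (p - 2) * s) := by ring
      _ ≤ ((1 + s) ^ 2 + (a ^ 2 - s ^ 2)) ^ (p / 2) := T2
      _ = (1 + a ^ 2 + 2 * s) ^ (p / 2) := by rw [← hbase]
  · -- case s < 0
    have hsuper := superadd_rpow (x := (1 + s) ^ 2) (y := a ^ 2 - s ^ 2) (r := p / 2)
        (by positivity) hB hp21
    rw [c1] at hsuper
    have hbern : 1 + p * s ≤ (1 + s) ^ p :=
      one_add_mul_self_le_rpow_one_add (by linarith) (by linarith)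
    have Ta := tangent_rpow (x := a ^ 2) (y := a ^ 2 - s ^ 2) (r := p / 2)
        (by positivity) hB hp21
    have ca1 : ((a : ℝ) ^ 2) ^ (p / 2) = a ^ p := by
      rw [sq_rpow_aux ha0, show 2 * (p / 2) = p by ring]
    have ca2 : ((a : ℝ) ^ 2) ^ (p / 2 - 1) = a ^ (p - 2) := by
      rw [sq_rpow_aux ha0, show 2 * (p / 2 - 1) = p - 2 by ring]
    rw [ca1, ca2] at Ta
    -- Ta : a ^ p + p / 2 * a ^ (p - 2) * (a ^ 2 - s ^ 2 - a ^ 2) ≤ (a ^ 2 - s ^ 2) ^ (p / 2)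
    have h1 : (0 : ℝ) ≤ p * a ^ (p - 2) := by positivity
    have h2 : (0 : ℝ) ≤ (-s) * (s + 2) :=
      mul_nonneg (by linarith) (by linarith)
    have hX : (0 : ℝ) ≤ p * a ^ (p - 2) * ((-s) * (s + 2)) := mul_nonneg h1 h2
    calc 1 + a ^ p + p * (1 + a ^ (p - 2)) * s
        ≤ (1 + p * s) + (a ^ p + p / 2 * a ^ (p - 2) * (a ^ 2 - s ^ 2 - a ^ 2)) := by
          linarith [hX]
      _ ≤ (1 + s) ^ p + (a ^ 2 - s ^ 2) ^ (p / 2) := add_le_add hbern Ta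
      _ ≤ ((1 + s) ^ 2 + (a ^ 2 - s ^ 2)) ^ (p / 2) := hsuper
      _ = (1 + a ^ 2 + 2 * s) ^ (p / 2) := by rw [← hbase]

theorem stmt2 (p t θ : ℝ) (hp : 3 ≤ p) (ht : |t| ≤ 1) (hθ : |θ| ≤ 1) :
    (1 + t ^ 2 + 2 * t * θ) ^ (p / 2) ≥
      1 + |t| ^ p + p * (Real.sign t * |t| ^ (p - 1)) * θ + p * t * θ := by
  rcases eq_or_ne t 0 with rfl | ht0
  · simp [Real.sign_zero, Real.zero_rpow (show p ≠ 0 by linarith)]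
  · have habs : (0 : ℝ) < |t| := abs_pos.mpr ht0
    have hst : |t * θ| ≤ |t| := by
      rw [abs_mul]
      calc |t| * |θ| ≤ |t| * 1 := mul_le_mul_of_nonneg_left hθ (abs_nonneg t)
        _ = |t| := mul_one _
    have hkey := key_ineq p |t| (t * θ) hp (abs_nonneg t) ht hst
    have hsign : Real.sign t * |t| ^ (p - 1) = |t| ^ (p - 2) * t := by
      have hmul : Real.sign t * |t| = t := by
        rcases lt_trichotomy t 0 with h | h | h
        · rw [Real.sign_of_neg h, abs_of_neg h]; ring
        · exact absurd h ht0
        · rw [Real.sign_of_pos h, abs_of_pos h]; ring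
      have hsplit : |t| ^ (p - 1) = |t| ^ (p - 2) * |t| := by
        rw [show p - 1 = (p - 2) + 1 by ring, Real.rpow_add_one habs.ne']
      rw [hsplit]
      calc Real.sign t * (|t| ^ (p - 2) * |t|) = |t| ^ (p - 2) * (Real.sign t * |t|) := by ring
        _ = |t| ^ (p - 2) * t := by rw [hmul]
    have hbase : 1 + t ^ 2 + 2 * t * θ = 1 + |t| ^ 2 + 2 * (t * θ) := by
      rw [sq_abs]; ring
    rw [ge_iff_le, hsign, hbase]
    calc 1 + |t| ^ p + p * (|t| ^ (p - 2) * t) * θ + p * t * θ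
        = 1 + |t| ^ p + p * (1 + |t| ^ (p - 2)) * (t * θ) := by ring
      _ ≤ (1 + |t| ^ 2 + 2 * (t * θ)) ^ (p / 2) := hkey
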